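/- A graph is a disjoint union of complete bipartite graphs (a bicluster graph) if and only if it contains no induced K_3 and no induced P_4. -/

import Mathlib

open SimpleGraph

/-- The graph obtained from `G` by toggling (adding/deleting) the edges in `F`. -/
def editedGraph {V : Type*} (G : SimpleGraph V) (F : Set (Sym2 V)) : SimpleGraph V :=
  SimpleGraph.fromEdgeSet (symmDiff G.edgeSet F)

/-- A graph is a starforest: every connected component is a star, i.e. has a center
adjacent to all other vertices of the component, the non-center vertices being
pairwise non-adjacent. -/
def IsStarGraph {V : Type*} (H : SimpleGraph V) : Prop :=
  ∀ c : H.ConnectedComponent, ∃ ctr ∈ c.supp,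
    (∀ v ∈ c.supp, v ≠ ctr → H.Adj ctr v) ∧
    (∀ u ∈ c.supp, ∀ v ∈ c.supp, u ≠ ctr → v ≠ ctr → ¬ H.Adj u v)

/-- A graph is a disjoint union of complete `t`-partite graphs: there is a colouring
with at most `t` colours such that two distinct vertices in the same connected
component are adjacent iff they get different colours. -/
def IsTPartiteCluster {V : Type*} (t : ℕ) (H : SimpleGraph V) : Prop :=
  ∃ f : V → Fin t, ∀ u v : V, u ≠ v → H.Reachable u v → (H.Adj u v ↔ f u ≠ f v)

lemma p4_embedding {V : Type*} {G : SimpleGraph V} {a b c d : V}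
    (hab : G.Adj a b) (hbc : G.Adj b c) (hcd : G.Adj c d)
    (hac : ¬ G.Adj a c) (had : ¬ G.Adj a d) (hbd : ¬ G.Adj b d)
    (hac' : a ≠ c) (had' : a ≠ d) (hbd' : b ≠ d) :
    Nonempty (SimpleGraph.pathGraph 4 ↪g G) := by
  have hab' : a ≠ b := hab.ne
  have hbc' : b ≠ c := hbc.ne
  have hcd' : c ≠ d := hcd.ne
  refine ⟨⟨⟨![a, b, c, d], ?_⟩, ?_⟩⟩
  · intro i j hij
    fin_cases i <;> fin_cases j <;> simp_all
  · intro i j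
    change G.Adj (![a, b, c, d] i) (![a, b, c, d] j) ↔ _
    have h1 := hab.symm
    have h2 := hbc.symm
    have h3 := hcd.symm
    have n1 : ¬ G.Adj c a := fun h => hac h.symm
    have n2 : ¬ G.Adj d a := fun h => had h.symm
    have n3 : ¬ G.Adj d b := fun h => hbd h.symm
    fin_cases i <;> fin_cases j <;>
      simp_all [SimpleGraph.pathGraph_adj, show ((3:Fin 4):ℕ) = 3 from rfl]

lemma exists_nbr {V : Type*} {G : SimpleGraph V} {r x : V} (h : G.Reachable r x)
    (hne : x ≠ r) : ∃ u, G.Adj r u := by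
  obtain ⟨w⟩ := h
  cases w with
  | nil => exact absurd rfl hne
  | cons h' _ => exact ⟨_, h'⟩

section Key
variable {V : Type*} {G : SimpleGraph V}
  (hT : ∀ a b c : V, G.Adj a b → G.Adj a c → G.Adj b c → False)
  (hP : IsEmpty (SimpleGraph.pathGraph 4 ↪g G))

include hT hP in
/-- Key structural lemma: every vertex in the component of `r` is `r`, a neighbour
of `r`, or adjacent to all neighbours of `r` (and not to `r`). -/
lemma keyL {r v : V} (w : G.Walk v r) :
    v = r ∨ G.Adj r v ∨ (¬ G.Adj r v ∧ ∀ u, G.Adj r u → G.Adj u v) := by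
  induction w with
  | nil => exact Or.inl rfl
  | @cons v x r hvx p ih =>
    -- ih : P x, want P v, using hvx : Adj v x
    by_cases hvr : v = r
    · exact Or.inl hvr
    by_cases hrv : G.Adj r v
    · exact Or.inr (Or.inl hrv)
    refine Or.inr (Or.inr ⟨hrv, ?_⟩)
    rcases ih with hxr | hrx | ⟨hrx, hall⟩
    · subst hxr; exact absurd hvx.symm hrv
    · -- x is a neighbour of r
      intro u hu
      by_cases hux : u = x
      · subst hux; exact hvx.symm
      by_contra huv
      -- induced P4 : v - x - r - u
      have hxu : ¬ G.Adj x u := fun h => hT r x u hrx hu h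
      have hvu : v ≠ u := fun h => hrv (h ▸ hu)
      exact hP.false (p4_embedding hvx hrx.symm hu
        (fun h => hrv h.symm) (fun h => huv h.symm) hxu hvr hvu
        (fun h => hux h.symm)).some
    · -- x in the far side; this forces a contradiction
      exfalso
      have hxr' : x ≠ r := fun h => hrv (by subst h; exact hvx.symm)
      obtain ⟨u0, hu0⟩ := exists_nbr ⟨p.reverse⟩ hxr'
      have hu0x : G.Adj u0 x := hall u0 hu0
      by_cases hu0v : G.Adj u0 v
      · exact hT u0 x v hu0x hu0v hvx.symm
      · have hu0v' : u0 ≠ v := fun h => hrv (h ▸ hu0)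
        exact hP.false (p4_embedding hu0 hu0x hvx.symm hrx hrv hu0v
          (fun h => hxr' h.symm) (fun h => hvr h.symm) hu0v').some

end Key

/-- A graph is a disjoint union of complete bipartite graphs (a bicluster graph)
iff it contains no induced `K₃` and no induced `P₄`. -/
theorem bicluster_iff_forbidden {V : Type*} (G : SimpleGraph V) :
    IsTPartiteCluster 2 G ↔
      IsEmpty ((⊤ : SimpleGraph (Fin 3)) ↪g G) ∧
      IsEmpty (SimpleGraph.pathGraph 4 ↪g G) := by
  classical
  constructor
  · rintro ⟨f, hf⟩
    constructor
    · constructor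
      intro e
      have h01 : G.Adj (e 0) (e 1) := e.map_adj_iff.mpr (by decide)
      have h12 : G.Adj (e 1) (e 2) := e.map_adj_iff.mpr (by decide)
      have h02 : G.Adj (e 0) (e 2) := e.map_adj_iff.mpr (by decide)
      have f01 := (hf _ _ h01.ne h01.reachable).mp h01
      have f12 := (hf _ _ h12.ne h12.reachable).mp h12
      have f02 := (hf _ _ h02.ne h02.reachable).mp h02
      have b0 := (f (e 0)).isLt
      have b1 := (f (e 1)).isLt
      have b2 := (f (e 2)).isLt
      simp only [Ne, Fin.ext_iff] at f01 f12 f02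
      omega
    · constructor
      intro e
      have h01 : G.Adj (e 0) (e 1) := e.map_adj_iff.mpr (by simp [SimpleGraph.pathGraph_adj])
      have h12 : G.Adj (e 1) (e 2) := e.map_adj_iff.mpr (by simp [SimpleGraph.pathGraph_adj])
      have h23 : G.Adj (e 2) (e 3) := e.map_adj_iff.mpr
        (by simp [SimpleGraph.pathGraph_adj, show ((3:Fin 4):ℕ) = 3 from rfl])
      have n02 : ¬ G.Adj (e 0) (e 2) := fun h => by
        have := e.map_adj_iff.mp h; simp [SimpleGraph.pathGraph_adj] at this
      have n13 : ¬ G.Adj (e 1) (e 3) := fun h => by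
        have := e.map_adj_iff.mp h
        simp [SimpleGraph.pathGraph_adj, show ((3:Fin 4):ℕ) = 3 from rfl] at this
      have n03 : ¬ G.Adj (e 0) (e 3) := fun h => by
        have := e.map_adj_iff.mp h
        simp [SimpleGraph.pathGraph_adj, show ((3:Fin 4):ℕ) = 3 from rfl] at this
      have ne02 : e 0 ≠ e 2 := fun h => by simpa using e.injective h
      have ne13 : e 1 ≠ e 3 := fun h => by simpa using e.injective h
      have ne03 : e 0 ≠ e 3 := fun h => by simpa using e.injective h
      have r02 : G.Reachable (e 0) (e 2) := h01.reachable.trans h12.reachable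
      have r13 : G.Reachable (e 1) (e 3) := h12.reachable.trans h23.reachable
      have r03 : G.Reachable (e 0) (e 3) := r02.trans h23.reachable
      have f01 := (hf _ _ h01.ne h01.reachable).mp h01
      have f12 := (hf _ _ h12.ne h12.reachable).mp h12
      have f23 := (hf _ _ h23.ne h23.reachable).mp h23
      have f02 : f (e 0) = f (e 2) := by
        by_contra h; exact n02 ((hf _ _ ne02 r02).mpr h)
      have f03 : f (e 0) ≠ f (e 3) := by
        rw [f02]; exact f23
      exact n03 ((hf _ _ ne03 r03).mpr f03)
  · rintro ⟨hK, hP⟩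
    have hT : ∀ a b c : V, G.Adj a b → G.Adj a c → G.Adj b c → False := by
      intro a b c hab hac hbc
      exact (show G.CliqueFree 3 from Classical.byContradiction fun h => hK.false (topEmbeddingOfNotCliqueFree h)) {a, b, c} (is3Clique_triple_iff.mpr ⟨hab, hac, hbc⟩)
    refine ⟨fun v => if G.Adj ((G.connectedComponentMk v).out) v then 1 else 0, ?_⟩
    intro u v hne hreach
    obtain ⟨r, hr⟩ : ∃ r, r = (G.connectedComponentMk u).out := ⟨_, rfl⟩
    have hcomp : G.connectedComponentMk v = G.connectedComponentMk u :=
      (ConnectedComponent.eq.mpr hreach).symm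
    simp only []
    rw [show (G.connectedComponentMk v).out = r by rw [hcomp, hr],
      show (G.connectedComponentMk u).out = r from hr.symm]
    have hru : G.Reachable r u := by
      rw [hr, ← ConnectedComponent.eq]
      exact (G.connectedComponentMk u).out_eq
    have hrv : G.Reachable r v := hru.trans hreach
    have Pu := keyL hT hP (hru.symm.some)
    have Pv := keyL hT hP (hrv.symm.some)
    rcases Pu with hur | hu | ⟨hu, hallu⟩
    · -- u = r
      subst hur
      by_cases h : G.Adj u v <;> simp [h, G.irrefl]
    · rcases Pv with hvr | hv | ⟨hv, hallv⟩
      · -- v = r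
        subst hvr
        simp [hu, G.irrefl, G.adj_comm u v, fun h : G.Adj u v => hne]
      · -- both neighbours of r : not adjacent
        have : ¬ G.Adj u v := fun h => hT r u v hu hv h
        simp [this, hu, hv]
      · -- u nbr, v far side : adjacent
        have : G.Adj u v := hallv u hu
        simp [this, hu, hv]
    · rcases Pv with hvr | hv | ⟨hv, hallv⟩
      · -- v = r, u far side
        subst hvr
        simp [G.irrefl, hu, show ¬ G.Adj u v from fun h => hu h.symm]
      · -- v nbr, u far side
        have : G.Adj u v := (hallu v hv).symm
        simp [this, hu, hv]
      · -- both far side : not adjacent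
        by_cases hur : u = r
        · subst hur
          simp [hv, G.irrefl]
        · obtain ⟨u0, hu0⟩ := exists_nbr hru hur
          have h1 : G.Adj u0 u := hallu u0 hu0
          have h2 : G.Adj u0 v := hallv u0 hu0
          have : ¬ G.Adj u v := fun h => hT u0 u v h1 h2 h
          simp [this, hu, hv]
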